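/- A two-qubit state ρ_AB admits a symmetric extension if and only if ρ_AB can be written as a finite convex combination ρ_AB = Σⱼ pⱼ·ρ_AB^{(j)} (pⱼ ≥ 0, Σⱼ pⱼ = 1), where each ρ_AB^{(j)} is a two-qubit state admitting a pure symmetric extension, i.e., there is a unit vector ψⱼ ∈ ℂ²⊗ℂ²⊗ℂ² with tr_{B'}(|ψⱼ⟩⟨ψⱼ|) = tr_B(|ψⱼ⟩⟨ψⱼ|) = ρ_AB^{(j)}. -/

import Mathlib

open Matrix Kronecker Complex
open scoped ComplexOrder

abbrev Q2 : Type := Fin 2 × Fin 2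
abbrev Q3 : Type := Fin 2 × Fin 2 × Fin 2

noncomputable section

/-- A two-qubit state: positive semidefinite with trace one. -/
def IsState2 (ρ : Matrix Q2 Q2 ℂ) : Prop := ρ.PosSemidef ∧ ρ.trace = 1

/-- A three-qubit state: positive semidefinite with trace one. -/
def IsState3 (ρ : Matrix Q3 Q3 ℂ) : Prop := ρ.PosSemidef ∧ ρ.trace = 1

/-- Partial trace over the first qubit (system A) of a two-qubit operator. -/
def ptraceA (ρ : Matrix Q2 Q2 ℂ) : Matrix (Fin 2) (Fin 2) ℂ :=
  Matrix.of fun b b' => ∑ a, ρ (a, b) (a, b')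

/-- Partial trace over the middle qubit (system B) of a three-qubit operator;
the result is indexed by the systems (A, B'). -/
def ptraceB3 (ρ : Matrix Q3 Q3 ℂ) : Matrix Q2 Q2 ℂ :=
  Matrix.of fun p q => ∑ b, ρ (p.1, b, p.2) (q.1, b, q.2)

/-- Partial trace over the last qubit (system B') of a three-qubit operator;
the result is indexed by the systems (A, B). -/
def ptraceB'3 (ρ : Matrix Q3 Q3 ℂ) : Matrix Q2 Q2 ℂ :=
  Matrix.of fun p q => ∑ c, ρ (p.1, p.2, c) (q.1, q.2, c)

/-- A two-qubit state admits a symmetric extension if there is a three-qubit state whose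
AB and AB' marginals both equal it. -/
def SymExt (ρ : Matrix Q2 Q2 ℂ) : Prop :=
  ∃ τ : Matrix Q3 Q3 ℂ, IsState3 τ ∧ ptraceB'3 τ = ρ ∧ ptraceB3 τ = ρ

/-- f(ρ) = tr(ρ_B²) − tr(ρ²) + 4√(det ρ). -/
def fC (ρ : Matrix Q2 Q2 ℂ) : ℝ :=
  ((ptraceA ρ * ptraceA ρ).trace).re - ((ρ * ρ).trace).re + 4 * Real.sqrt ρ.det.re

/-- The rank-one projector |ψ⟩⟨ψ|. -/
def proj {n : Type*} (ψ : n → ℂ) : Matrix n n ℂ := Matrix.vecMulVec ψ (star ψ)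

/-- A two-qubit state admits a pure symmetric extension. -/
def PureSymExt (ρ : Matrix Q2 Q2 ℂ) : Prop :=
  ∃ ψ : Q3 → ℂ, (∑ x, Complex.normSq (ψ x)) = 1 ∧
    ptraceB'3 (proj ψ) = ρ ∧ ptraceB3 (proj ψ) = ρ

/-- The multiset of nonzero eigenvalues (with multiplicity) of a complex matrix. -/
def nonzeroSpec {n : Type*} [Fintype n] [DecidableEq n] (M : Matrix n n ℂ) : Multiset ℂ :=
  M.charpoly.roots.filter (· ≠ 0)

/-- The trace norm ‖X‖_tr = tr √(X†X) of a 2×2 complex matrix. -/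
def trNorm (X : Matrix (Fin 2) (Fin 2) ℂ) : ℝ :=
  (((Matrix.posSemidef_conjTranspose_mul_self X).1.eigenvectorUnitary.1 *
      diagonal (((↑) : ℝ → ℂ) ∘ Real.sqrt ∘ (Matrix.posSemidef_conjTranspose_mul_self X).1.eigenvalues) *
      (star (Matrix.posSemidef_conjTranspose_mul_self X).1.eigenvectorUnitary :
        Matrix (Fin 2) (Fin 2) ℂ)).trace).re

/-- The supporting-hyperplane observable H_AB(σ) = √(det σ)·σ⁻¹ − σ + I₂⊗σ_B. -/
def HAB (σ : Matrix Q2 Q2 ℂ) : Matrix Q2 Q2 ℂ :=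
  ((Real.sqrt σ.det.re : ℝ) : ℂ) • σ⁻¹ - σ + (1 : Matrix (Fin 2) (Fin 2) ℂ) ⊗ₖ ptraceA σ

namespace SEP

def swE : Q3 ≃ Q3 := ⟨fun p => (p.1, p.2.2, p.2.1), fun p => (p.1, p.2.2, p.2.1), fun _ => rfl, fun _ => rfl⟩

@[simp] lemma swE_swE (p : Q3) : swE (swE p) = p := rfl

def S : Matrix Q3 Q3 ℂ := (1 : Matrix Q3 Q3 ℂ).submatrix swE id

lemma S_mul (X : Matrix Q3 Q3 ℂ) : S * X = X.submatrix swE id := by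
  have := Matrix.one_submatrix_mul (α := ℂ) (⇑swE) (Equiv.refl Q3) X
  simpa [S] using this

lemma mul_S (X : Matrix Q3 Q3 ℂ) : X * S = X.submatrix id swE := by
  have := Matrix.mul_submatrix_one (α := ℂ) swE (id : Q3 → Q3) X
  simpa [S, show swE.symm = swE from rfl] using this

lemma S_herm : S.conjTranspose = S := by
  ext p q
  rcases p with ⟨a, b, c⟩
  rcases q with ⟨a', b', c'⟩
  simp only [S, Matrix.conjTranspose_apply, Matrix.submatrix_apply, Matrix.one_apply, swE,
    Equiv.coe_fn_mk, id_eq]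
  by_cases h : (a', c', b') = (a, b, c)
  · obtain ⟨rfl, h2⟩ := Prod.mk.injEq .. ▸ h
    simp_all [Prod.ext_iff]
  · have h2 : ¬ ((a, c, b) = (a', b', c')) := by
      simp_all [Prod.ext_iff]; tauto
    simp [h, h2]

lemma S_mul_S : S * S = 1 := by
  rw [S_mul]
  ext p q
  rfl

lemma S_mulVec (v : Q3 → ℂ) : S *ᵥ v = fun x => v (swE x) := by
  funext x
  simp [S, Matrix.mulVec, dotProduct, Matrix.one_apply]


lemma psd_smul {n : Type*} [Fintype n] {c : ℝ} (hc : 0 ≤ c) {A : Matrix n n ℂ}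
    (hA : A.PosSemidef) : ((c : ℂ) • A).PosSemidef := by
  refine Matrix.PosSemidef.of_dotProduct_mulVec_nonneg ?_ fun x => ?_
  · unfold Matrix.IsHermitian
    rw [Matrix.conjTranspose_smul, hA.1.eq]
    congr 1
    simp [Complex.ext_iff]
  · rw [Matrix.smul_mulVec, dotProduct_smul, smul_eq_mul]
    exact mul_nonneg (by exact_mod_cast Complex.zero_le_real.2 hc) (hA.dotProduct_mulVec_nonneg x)

lemma psd_sum {n ι : Type*} [Fintype n] (s : Finset ι) (f : ι → Matrix n n ℂ)
    (hf : ∀ i ∈ s, (f i).PosSemidef) : (∑ i ∈ s, f i).PosSemidef := by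
  classical
  induction s using Finset.induction_on with
  | empty => simpa using Matrix.PosSemidef.zero
  | insert _ _ hni ih =>
    rw [Finset.sum_insert hni]
    exact (hf _ (Finset.mem_insert_self ..)).add
      (ih fun i hi => hf i (Finset.mem_insert_of_mem hi))

/-- ptraceB'3 as a linear map. -/
def LB' : Matrix Q3 Q3 ℂ →ₗ[ℂ] Matrix Q2 Q2 ℂ where
  toFun := ptraceB'3
  map_add' X Y := by ext p q; simp [ptraceB'3, Finset.sum_add_distrib]
  map_smul' c X := by ext p q; simp [ptraceB'3, Finset.mul_sum, mul_add]

def LB : Matrix Q3 Q3 ℂ →ₗ[ℂ] Matrix Q2 Q2 ℂ where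
  toFun := ptraceB3
  map_add' X Y := by ext p q; simp [ptraceB3, Finset.sum_add_distrib]
  map_smul' c X := by ext p q; simp [ptraceB3, Finset.mul_sum, mul_add]

lemma trace_ptraceB'3 (X : Matrix Q3 Q3 ℂ) : (ptraceB'3 X).trace = X.trace := by
  simp [Matrix.trace, ptraceB'3, Matrix.diag, Fintype.sum_prod_type]

lemma trace_proj (w : Q3 → ℂ) : (proj w).trace = ((∑ x, Complex.normSq (w x) : ℝ) : ℂ) := by
  simp only [Matrix.trace, proj, Matrix.diag, Matrix.vecMulVec_apply, Pi.star_apply]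
  push_cast
  refine Finset.sum_congr rfl fun x _ => ?_
  rw [← Complex.mul_conj]
  rfl

lemma psd_ptraceB'3_proj (w : Q3 → ℂ) : (ptraceB'3 (proj w)).PosSemidef := by
  refine Matrix.PosSemidef.of_dotProduct_mulVec_nonneg ?_ fun x => ?_
  · ext p q
    simp only [Matrix.conjTranspose_apply, ptraceB'3, Matrix.of_apply, proj,
      Matrix.vecMulVec_apply, Pi.star_apply, star_sum, star_mul', star_star]
    exact Finset.sum_congr rfl fun c _ => mul_comm _ _
  · have key : dotProduct (star x) ((ptraceB'3 (proj w)) *ᵥ x)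
        = ∑ c : Fin 2, (∑ p : Q2, star (x p) * w (p.1, p.2, c)) *
            star (∑ p : Q2, star (x p) * w (p.1, p.2, c)) := by
      simp only [dotProduct, Matrix.mulVec, ptraceB'3, Matrix.of_apply, proj,
        Matrix.vecMulVec_apply, Pi.star_apply, Finset.sum_mul, Finset.mul_sum, star_sum,
        star_mul', star_star]
      conv_lhs => enter [2, p]; rw [Finset.sum_comm]
      rw [Finset.sum_comm]
      refine Finset.sum_congr rfl fun c _ => ?_
      rw [Finset.sum_comm]
      refine Finset.sum_congr rfl fun q _ => ?_
      refine Finset.sum_congr rfl fun p _ => ?_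
      ring
    rw [key]
    exact Finset.sum_nonneg fun c _ => mul_star_self_nonneg _

lemma marg_eq {w : Q3 → ℂ} (hw : ∀ p q : Q3, w (swE p) * star (w (swE q)) = w p * star (w q)) :
    ptraceB3 (proj w) = ptraceB'3 (proj w) := by
  ext p q
  rcases p with ⟨a, c⟩
  rcases q with ⟨a', c'⟩
  simp only [ptraceB3, ptraceB'3, Matrix.of_apply, proj, Matrix.vecMulVec_apply, Pi.star_apply]
  exact Finset.sum_congr rfl fun b _ => hw (a, c, b) (a', c', b)

lemma herm_sum {n : Type*} [Fintype n] [DecidableEq n] {A : Matrix n n ℂ}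
    (hA : A.IsHermitian) :
    A = ∑ i, ((hA.eigenvalues i : ℝ) : ℂ) • proj (hA.eigenvectorBasis i) := by
  conv_lhs => rw [hA.spectral_theorem, Unitary.conjStarAlgAut_apply]
  ext p q
  rw [Matrix.mul_apply, Matrix.sum_apply]
  refine Finset.sum_congr rfl fun i _ => ?_
  rw [Matrix.mul_apply, Finset.sum_eq_single i]
  · simp only [Matrix.diagonal_apply_eq, Function.comp_apply, Matrix.star_apply,
      Matrix.IsHermitian.eigenvectorUnitary_apply, Matrix.smul_apply, proj,
      Matrix.vecMulVec_apply, Pi.star_apply, smul_eq_mul]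
    rw [mul_right_comm, mul_comm]
    rfl
  · intro j _ hj
    simp [Matrix.diagonal_apply_ne _ hj]
  · simp


lemma basis_normSq {n : Type*} [Fintype n] [DecidableEq n] {A : Matrix n n ℂ}
    (hA : A.IsHermitian) (i : n) :
    ∑ x, Complex.normSq (hA.eigenvectorBasis i x) = 1 := by
  have h := hA.eigenvectorBasis.orthonormal.1 i
  have h1 : Real.sqrt (∑ x, ‖hA.eigenvectorBasis i x‖ ^ 2) = 1 := by
    rw [← EuclideanSpace.norm_eq]; exact h
  have h2 : ∑ x, ‖hA.eigenvectorBasis i x‖ ^ 2 = 1 := by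
    have := congrArg (· ^ 2) h1
    simpa [Real.sq_sqrt (Finset.sum_nonneg fun x _ => sq_nonneg _)] using this
  rw [← h2]
  exact Finset.sum_congr rfl fun x _ => by
    rw [Complex.normSq_eq_norm_sq]

lemma eig_symm {M : Matrix Q3 Q3 ℂ} (hM : M.IsHermitian) (hS : S * M = M) {i : Q3}
    (hi : hM.eigenvalues i ≠ 0) (x : Q3) :
    hM.eigenvectorBasis i (swE x) = hM.eigenvectorBasis i x := by
  have h1 := hM.mulVec_eigenvectorBasis i
  have h2 : S *ᵥ (M *ᵥ ⇑(hM.eigenvectorBasis i)) = M *ᵥ ⇑(hM.eigenvectorBasis i) := by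
    rw [Matrix.mulVec_mulVec, hS]
  rw [h1, S_mulVec] at h2
  have h3 := congrFun h2 x
  simp only [Pi.smul_apply, Complex.real_smul] at h3
  exact mul_left_cancel₀ (Complex.ofReal_ne_zero.mpr hi) h3

lemma eig_antisymm {M : Matrix Q3 Q3 ℂ} (hM : M.IsHermitian) (hS : S * M = -M) {i : Q3}
    (hi : hM.eigenvalues i ≠ 0) (x : Q3) :
    hM.eigenvectorBasis i (swE x) = -(hM.eigenvectorBasis i x) := by
  have h1 := hM.mulVec_eigenvectorBasis i
  have h2 : S *ᵥ (M *ᵥ ⇑(hM.eigenvectorBasis i)) = -(M *ᵥ ⇑(hM.eigenvectorBasis i)) := by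
    rw [Matrix.mulVec_mulVec, hS, Matrix.neg_mulVec]
  rw [h1, S_mulVec] at h2
  have h3 := congrFun h2 x
  simp only [Pi.smul_apply, Pi.neg_apply, Complex.real_smul] at h3
  exact mul_left_cancel₀ (Complex.ofReal_ne_zero.mpr hi) (h3.trans (neg_mul_eq_mul_neg _ _))

lemma proj_psd {n : Type*} [Fintype n] (ψ : n → ℂ) : (proj ψ).PosSemidef := by
  refine Matrix.PosSemidef.of_dotProduct_mulVec_nonneg ?_ fun x => ?_
  · ext i j
    simp only [Matrix.conjTranspose_apply, proj, Matrix.vecMulVec_apply, Pi.star_apply,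
      star_mul', star_star]
    exact mul_comm _ _
  · have key : dotProduct (star x) ((proj ψ) *ᵥ x)
        = (∑ i, star (x i) * ψ i) * star (∑ i, star (x i) * ψ i) := by
      simp only [dotProduct, Matrix.mulVec, proj, Matrix.vecMulVec_apply, Pi.star_apply,
        Finset.sum_mul, Finset.mul_sum, star_sum, star_mul', star_star]
      rw [Finset.sum_comm]
      refine Finset.sum_congr rfl fun i _ => Finset.sum_congr rfl fun j _ => ?_
      ring
    rw [key]
    exact mul_star_self_nonneg _


def ψ0 : Q3 → ℂ := fun x => if x = ((0 : Fin 2), (0 : Fin 2), (0 : Fin 2)) then 1 else 0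

lemma ψ0_norm : ∑ x, Complex.normSq (ψ0 x) = 1 := by
  simp [ψ0, apply_ite Complex.normSq]

lemma ψ0_sym (x : Q3) : ψ0 (swE x) = ψ0 x := by
  rcases x with ⟨a, b, c⟩
  fin_cases a <;> fin_cases b <;> fin_cases c <;> rfl

end SEP

set_option maxHeartbeats 1000000 in
/-- A two-qubit state admits a symmetric extension iff it is a finite convex combination
of two-qubit states each admitting a pure symmetric extension. -/
theorem symExt_iff_convex_combination_of_pure (ρ : Matrix Q2 Q2 ℂ) (hρ : IsState2 ρ) :
    SymExt ρ ↔
      ∃ (k : ℕ) (p : Fin k → ℝ) (τ : Fin k → Matrix Q2 Q2 ℂ),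
        (∀ j, 0 ≤ p j) ∧ (∑ j, p j) = 1 ∧
        (∀ j, IsState2 (τ j) ∧ PureSymExt (τ j)) ∧
        ρ = ∑ j, (p j : ℂ) • τ j := by

  constructor
  · rintro ⟨t, ⟨hpsd, htr⟩, hB', hB⟩
    classical
    set σ : Matrix Q3 Q3 ℂ := ((1/2 : ℝ) : ℂ) • (t + t.submatrix SEP.swE SEP.swE) with hσdef
    have hσpsd : σ.PosSemidef := SEP.psd_smul (by norm_num) (hpsd.add (hpsd.submatrix _))
    have htr_sub : (t.submatrix SEP.swE SEP.swE).trace = t.trace := by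
      simp only [Matrix.trace, Matrix.diag, Matrix.submatrix_apply]
      exact Fintype.sum_equiv SEP.swE _ _ (fun x => rfl)
    have hσtr : σ.trace = 1 := by
      rw [hσdef, Matrix.trace_smul, Matrix.trace_add, htr_sub, htr, smul_eq_mul]
      norm_num
    have hsB' : ptraceB'3 (t.submatrix SEP.swE SEP.swE) = ptraceB3 t := rfl
    have hsB : ptraceB3 (t.submatrix SEP.swE SEP.swE) = ptraceB'3 t := rfl
    have half : ∀ X : Matrix Q2 Q2 ℂ, ((1/2:ℝ):ℂ) • (X + X) = X := fun X => by
      rw [← two_smul ℂ X, smul_smul]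
      norm_num
    have hmB' : ptraceB'3 σ = ρ := by
      have h : ptraceB'3 σ
          = ((1/2:ℝ):ℂ) • (ptraceB'3 t + ptraceB'3 (t.submatrix SEP.swE SEP.swE)) := by
        show SEP.LB' σ = _
        rw [hσdef, _root_.map_smul, _root_.map_add]
        rfl
      rw [h, hsB', hB', hB, half]
    have hmB : ptraceB3 σ = ρ := by
      have h : ptraceB3 σ
          = ((1/2:ℝ):ℂ) • (ptraceB3 t + ptraceB3 (t.submatrix SEP.swE SEP.swE)) := by
        show SEP.LB σ = _
        rw [hσdef, _root_.map_smul, _root_.map_add]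
        rfl
      rw [h, hsB, hB', hB, half]
    have hσsub : σ.submatrix SEP.swE SEP.swE = σ := by
      rw [hσdef]
      ext p q
      simp only [Matrix.submatrix_apply, Matrix.smul_apply, Matrix.add_apply, SEP.swE_swE]
      exact congrArg _ (add_comm _ _)
    have hSσS : SEP.S * σ * SEP.S = σ := by
      rw [SEP.S_mul, SEP.mul_S]
      ext p q
      show σ.submatrix ⇑SEP.swE ⇑SEP.swE p q = σ p q
      rw [hσsub]
    set Mp : Matrix Q3 Q3 ℂ := ((1/4:ℝ):ℂ) • ((1 + SEP.S) * σ * (1 + SEP.S)) with hMpdef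
    set Mm : Matrix Q3 Q3 ℂ := ((1/4:ℝ):ℂ) • ((1 - SEP.S) * σ * (1 - SEP.S)) with hMmdef
    have hctp : (1 + SEP.S)ᴴ = 1 + SEP.S := by
      rw [Matrix.conjTranspose_add, Matrix.conjTranspose_one, SEP.S_herm]
    have hctm : (1 - SEP.S)ᴴ = 1 - SEP.S := by
      rw [Matrix.conjTranspose_sub, Matrix.conjTranspose_one, SEP.S_herm]
    have hMp_psd : Mp.PosSemidef := by
      have h1 := hσpsd.mul_mul_conjTranspose_same (1 + SEP.S)
      rw [hctp] at h1
      exact SEP.psd_smul (by norm_num) h1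
    have hMm_psd : Mm.PosSemidef := by
      have h1 := hσpsd.mul_mul_conjTranspose_same (1 - SEP.S)
      rw [hctm] at h1
      exact SEP.psd_smul (by norm_num) h1
    have hSMp : SEP.S * Mp = Mp := by
      have h : SEP.S * (1 + SEP.S) = 1 + SEP.S := by
        rw [mul_add, mul_one, SEP.S_mul_S, add_comm]
      rw [hMpdef, mul_smul_comm, ← Matrix.mul_assoc, ← Matrix.mul_assoc, h]
    have hSMm : SEP.S * Mm = -Mm := by
      have h : SEP.S * (1 - SEP.S) = -(1 - SEP.S) := by
        rw [mul_sub, mul_one, SEP.S_mul_S, neg_sub]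
      rw [hMmdef, mul_smul_comm, ← Matrix.mul_assoc, ← Matrix.mul_assoc, h, neg_mul, neg_mul,
        smul_neg]
    have key : (1 + SEP.S) * σ * (1 + SEP.S) + (1 - SEP.S) * σ * (1 - SEP.S)
        = σ + σ + (SEP.S * σ * SEP.S + SEP.S * σ * SEP.S) := by noncomm_ring
    have hMpMm : Mp + Mm = σ := by
      rw [hMpdef, hMmdef, ← smul_add, key, hSσS,
        show ((1/4:ℝ):ℂ) = (1/4 : ℂ) by norm_num]
      module
    have hdecomp_p := SEP.herm_sum hMp_psd.1
    have hdecomp_m := SEP.herm_sum hMm_psd.1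
    have htrMp : Mp.trace = ((∑ i, hMp_psd.1.eigenvalues i : ℝ) : ℂ) := by
      have hterm : ∀ i : Q3,
          (((hMp_psd.1.eigenvalues i : ℝ) : ℂ) • proj (hMp_psd.1.eigenvectorBasis i)).trace
            = ((hMp_psd.1.eigenvalues i : ℝ) : ℂ) := by
        intro i
        rw [Matrix.trace_smul, SEP.trace_proj, SEP.basis_normSq]
        simp
      have h := congrArg Matrix.trace hdecomp_p
      rw [Matrix.trace_sum, Finset.sum_congr rfl fun i _ => hterm i] at h
      exact h.trans (by norm_cast)
    have htrMm : Mm.trace = ((∑ i, hMm_psd.1.eigenvalues i : ℝ) : ℂ) := by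
      have hterm : ∀ i : Q3,
          (((hMm_psd.1.eigenvalues i : ℝ) : ℂ) • proj (hMm_psd.1.eigenvectorBasis i)).trace
            = ((hMm_psd.1.eigenvalues i : ℝ) : ℂ) := by
        intro i
        rw [Matrix.trace_smul, SEP.trace_proj, SEP.basis_normSq]
        simp
      have h := congrArg Matrix.trace hdecomp_m
      rw [Matrix.trace_sum, Finset.sum_congr rfl fun i _ => hterm i] at h
      exact h.trans (by norm_cast)
    have hsum1 : (∑ i, hMp_psd.1.eigenvalues i) + (∑ i, hMm_psd.1.eigenvalues i) = 1 := by
      have h := congrArg Matrix.trace hMpMm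
      rw [Matrix.trace_add, htrMp, htrMm, hσtr] at h
      exact_mod_cast h
    set g : Q3 ⊕ Q3 → ℝ := Sum.elim hMp_psd.1.eigenvalues hMm_psd.1.eigenvalues with hgdef
    set V : Q3 ⊕ Q3 → Q3 → ℂ :=
      Sum.elim (fun i => hMp_psd.1.eigenvectorBasis i) (fun i => hMm_psd.1.eigenvectorBasis i)
        with hVdef
    have hVprod : ∀ i, g i ≠ 0 →
        ∀ p q : Q3, V i (SEP.swE p) * star (V i (SEP.swE q)) = V i p * star (V i q) := by
      rintro (i | i) hi p q
      · simp only [hgdef, hVdef, Sum.elim_inl] at hi ⊢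
        rw [SEP.eig_symm hMp_psd.1 hSMp hi, SEP.eig_symm hMp_psd.1 hSMp hi]
      · simp only [hgdef, hVdef, Sum.elim_inr] at hi ⊢
        rw [SEP.eig_antisymm hMm_psd.1 hSMm hi, SEP.eig_antisymm hMm_psd.1 hSMm hi,
          star_neg, neg_mul_neg]
    have hVnorm : ∀ i, ∑ x, Complex.normSq (V i x) = 1 := by
      rintro (i | i)
      · simpa only [hVdef, Sum.elim_inl] using SEP.basis_normSq hMp_psd.1 i
      · simpa only [hVdef, Sum.elim_inr] using SEP.basis_normSq hMm_psd.1 i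
    set T : Q3 ⊕ Q3 → Matrix Q2 Q2 ℂ :=
      fun i => if g i = 0 then ptraceB'3 (proj SEP.ψ0) else ptraceB'3 (proj (V i)) with hTdef
    have hg0 : ∀ i, 0 ≤ g i := by
      rintro (i | i)
      · simpa only [hgdef, Sum.elim_inl] using hMp_psd.eigenvalues_nonneg i
      · simpa only [hgdef, Sum.elim_inr] using hMm_psd.eigenvalues_nonneg i
    have hT : ∀ i, IsState2 (T i) ∧ PureSymExt (T i) := by
      intro i
      by_cases h : g i = 0
      · have hTi : T i = ptraceB'3 (proj SEP.ψ0) := by simp only [hTdef]; rw [if_pos h]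
        rw [hTi]
        refine ⟨⟨SEP.psd_ptraceB'3_proj _, ?_⟩, SEP.ψ0, SEP.ψ0_norm, rfl, ?_⟩
        · rw [SEP.trace_ptraceB'3, SEP.trace_proj, SEP.ψ0_norm]
          norm_num
        · rw [SEP.marg_eq fun p q => by rw [SEP.ψ0_sym, SEP.ψ0_sym]]
      · have hTi : T i = ptraceB'3 (proj (V i)) := by simp only [hTdef]; rw [if_neg h]
        rw [hTi]
        refine ⟨⟨SEP.psd_ptraceB'3_proj _, ?_⟩, V i, hVnorm i, rfl, ?_⟩
        · rw [SEP.trace_ptraceB'3, SEP.trace_proj, hVnorm i]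
          norm_num
        · rw [SEP.marg_eq (hVprod i h)]
    have hrep : ∑ i, (g i : ℂ) • T i = ρ := by
      have h1 : ∀ i, (g i : ℂ) • T i = (g i : ℂ) • ptraceB'3 (proj (V i)) := by
        intro i
        by_cases h : g i = 0
        · rw [h]
          simp
        · have hTi : T i = ptraceB'3 (proj (V i)) := by simp only [hTdef]; rw [if_neg h]
          rw [hTi]
      calc ∑ i, (g i : ℂ) • T i = ∑ i, (g i : ℂ) • SEP.LB' (proj (V i)) :=
            Finset.sum_congr rfl fun i _ => h1 i
        _ = SEP.LB' (∑ i, (g i : ℂ) • proj (V i)) := by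
            rw [map_sum]
            exact Finset.sum_congr rfl fun i _ => (SEP.LB'.map_smul _ _).symm
        _ = SEP.LB' (Mp + Mm) := by
            congr 1
            rw [Fintype.sum_sum_type]
            simp only [hgdef, hVdef, Sum.elim_inl, Sum.elim_inr]
            rw [← hdecomp_p, ← hdecomp_m]
        _ = ptraceB'3 σ := by rw [show SEP.LB' (Mp + Mm) = ptraceB'3 (Mp + Mm) from rfl, hMpMm]
        _ = ρ := hmB'
    refine ⟨Fintype.card (Q3 ⊕ Q3), fun j => g ((Fintype.equivFin (Q3 ⊕ Q3)).symm j),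
      fun j => T ((Fintype.equivFin (Q3 ⊕ Q3)).symm j), fun j => hg0 _, ?_, fun j => hT _, ?_⟩
    · rw [Equiv.sum_comp (Fintype.equivFin (Q3 ⊕ Q3)).symm g, Fintype.sum_sum_type]
      simp only [hgdef, Sum.elim_inl, Sum.elim_inr]
      exact hsum1
    · exact ((Equiv.sum_comp (Fintype.equivFin (Q3 ⊕ Q3)).symm
        fun i => (g i : ℂ) • T i).trans hrep).symm
  · rintro ⟨k, p, q, hq0, hq1, hqs, hrep⟩
    choose ψ hnorm hb' hb using fun j => (hqs j).2
    refine ⟨∑ j, (p j : ℂ) • proj (ψ j), ⟨?_, ?_⟩, ?_, ?_⟩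
    · exact SEP.psd_sum _ _ fun j _ => SEP.psd_smul (hq0 j) (SEP.proj_psd (ψ j))
    · rw [Matrix.trace_sum]
      have hterm : ∀ j, ((p j : ℂ) • proj (ψ j)).trace = (p j : ℂ) := by
        intro j
        rw [Matrix.trace_smul, SEP.trace_proj, hnorm j]
        simp
      rw [Finset.sum_congr rfl fun j _ => hterm j]
      exact_mod_cast congrArg (Complex.ofReal) hq1
    · have h : ptraceB'3 (∑ j, (p j : ℂ) • proj (ψ j))
          = ∑ j, (p j : ℂ) • ptraceB'3 (proj (ψ j)) := by
        show SEP.LB' _ = _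
        rw [map_sum]
        exact Finset.sum_congr rfl fun j _ => SEP.LB'.map_smul _ _
      rw [h, Finset.sum_congr rfl fun j _ => by rw [hb' j], ← hrep]
    · have h : ptraceB3 (∑ j, (p j : ℂ) • proj (ψ j))
          = ∑ j, (p j : ℂ) • ptraceB3 (proj (ψ j)) := by
        show SEP.LB _ = _
        rw [map_sum]
        exact Finset.sum_congr rfl fun j _ => SEP.LB.map_smul _ _
      rw [h, Finset.sum_congr rfl fun j _ => by rw [hb j], ← hrep]
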